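/- If a and b are floating-point numbers in a radix-2 precision-p format and fl denotes round-to-nearest, then the error of the floating-point addition, e = (a + b) - fl(a + b), is itself exactly representable as a floating-point number in the same format. -/

import Mathlib

/-- Radix-2 precision-`p` floating-point numbers (unbounded exponent model). -/
def Fp (p : ℕ) : Set ℝ := {x | ∃ m e : ℤ, |m| < 2 ^ p ∧ x = (m : ℝ) * (2 : ℝ) ^ e}

lemma neighbor_mem (p : ℕ) (hp : 0 < p) (m e : ℤ) (hm : |m| < 2 ^ p)
    (ε : ℤ) (hε : ε = 1 ∨ ε = -1) :
    ((m + ε : ℤ) : ℝ) * (2 : ℝ) ^ e ∈ Fp p := by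
  by_cases h : |m + ε| < 2 ^ p
  · exact ⟨m + ε, e, h, rfl⟩
  · have hle : |m + ε| ≤ |m| + 1 := by
      calc |m + ε| ≤ |m| + |ε| := abs_add_le _ _
      _ ≤ |m| + 1 := by rcases hε with rfl | rfl <;> simp
    have habs : |m + ε| = 2 ^ p := by omega
    have hp' : p = (p - 1) + 1 := by omega
    have hpow : ((2 : ℝ) ^ p) = 2 ^ (p - 1) * 2 := by
      conv_lhs => rw [hp', pow_succ]
    have hmlt : |(2 : ℤ) ^ (p - 1)| < 2 ^ p := by
      rw [abs_of_nonneg (by positivity)]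
      exact pow_lt_pow_right₀ (by norm_num) (by omega)
    rcases abs_eq (by positivity : (0:ℤ) ≤ 2 ^ p) |>.mp habs with h1 | h1
    · refine ⟨2 ^ (p - 1), e + 1, hmlt, ?_⟩
      rw [h1]
      push_cast
      rw [zpow_add₀ (by norm_num : (2:ℝ) ≠ 0), hpow]
      ring
    · refine ⟨-(2 ^ (p - 1)), e + 1, by rwa [abs_neg], ?_⟩
      rw [h1]
      push_cast
      rw [zpow_add₀ (by norm_num : (2:ℝ) ≠ 0), hpow]
      ring

lemma half_ulp (p : ℕ) (hp : 0 < p) (fl : ℝ → ℝ)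
    (hnear : ∀ x : ℝ, ∀ y ∈ Fp p, |fl x - x| ≤ |y - x|)
    (x : ℝ) (m e : ℤ) (hm : |m| < 2 ^ p) (hx : fl x = (m : ℝ) * (2 : ℝ) ^ e) :
    |fl x - x| ≤ (2 : ℝ) ^ e / 2 := by
  have h1 := hnear x _ (neighbor_mem p hp m e hm 1 (Or.inl rfl))
  have h2 := hnear x _ (neighbor_mem p hp m e hm (-1) (Or.inr rfl))
  set c : ℝ := (2 : ℝ) ^ e with hc
  set u : ℝ := fl x - x with hu
  have e1 : ((m + 1 : ℤ) : ℝ) * c - x = u + c := by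
    push_cast; rw [hu, hx]; ring
  have e2 : ((m + (-1) : ℤ) : ℝ) * c - x = u - c := by
    push_cast; rw [hu, hx]; ring
  rw [e1] at h1
  rw [e2] at h2
  have hcpos : (0:ℝ) < c := by positivity
  have s1 : u ^ 2 ≤ (u + c) ^ 2 := by
    have := pow_le_pow_left₀ (abs_nonneg u) h1 2
    rwa [sq_abs, sq_abs] at this
  have s2 : u ^ 2 ≤ (u - c) ^ 2 := by
    have := pow_le_pow_left₀ (abs_nonneg u) h2 2
    rwa [sq_abs, sq_abs] at this
  rw [abs_le]
  constructor <;> nlinarith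

/-- The error of a round-to-nearest floating-point addition is itself
exactly representable in the same format. -/
theorem twoSum_error_representable (p : ℕ) (hp : 0 < p) (fl : ℝ → ℝ)
    (hmem : ∀ x : ℝ, fl x ∈ Fp p)
    (hnear : ∀ x : ℝ, ∀ y ∈ Fp p, |fl x - x| ≤ |y - x|)
    (a b : ℝ) (ha : a ∈ Fp p) (hb : b ∈ Fp p) :
    (a + b) - fl (a + b) ∈ Fp p := by
  obtain ⟨ma, ea, hma, haeq⟩ := ha
  obtain ⟨mb, eb, hmb, hbeq⟩ := hb
  obtain ⟨mf, ef, hmf, hfeq⟩ := hmem (a + b)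
  set g : ℤ := min ea (min eb ef) with hg
  have hgea : g ≤ ea := min_le_left _ _
  have hgeb : g ≤ eb := le_trans (min_le_right _ _) (min_le_left _ _)
  have hgef : g ≤ ef := le_trans (min_le_right _ _) (min_le_right _ _)
  have key : ∀ (m e : ℤ), g ≤ e →
      (m : ℝ) * (2 : ℝ) ^ e = ((m * 2 ^ (e - g).toNat : ℤ) : ℝ) * (2 : ℝ) ^ g := by
    intro m e he
    have h1 : ((2:ℝ) ^ (e - g).toNat : ℝ) = (2:ℝ) ^ (e - g : ℤ) := by
      rw [← zpow_natCast, Int.toNat_of_nonneg (by omega)]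
    push_cast
    rw [h1, mul_assoc, ← zpow_add₀ (by norm_num : (2:ℝ) ≠ 0),
      sub_add_cancel]
  set M : ℤ := ma * 2 ^ (ea - g).toNat + mb * 2 ^ (eb - g).toNat
      - mf * 2 ^ (ef - g).toNat with hM
  have hr : (a + b) - fl (a + b) = (M : ℝ) * (2 : ℝ) ^ g := by
    rw [hfeq, haeq, hbeq, key ma ea hgea, key mb eb hgeb, key mf ef hgef,
      hM, Int.cast_sub, Int.cast_add]
    ring
  refine ⟨M, g, ?_, hr⟩
  have hgpos : (0:ℝ) < (2:ℝ) ^ g := by positivity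
  -- bounds on the rounding error
  have hba : |fl (a + b) - (a + b)| ≤ |a| := by
    have := hnear (a + b) b ⟨mb, eb, hmb, hbeq⟩
    rwa [show b - (a + b) = -a by ring, abs_neg] at this
  have hbb : |fl (a + b) - (a + b)| ≤ |b| := by
    have := hnear (a + b) a ⟨ma, ea, hma, haeq⟩
    rwa [show a - (a + b) = -b by ring, abs_neg] at this
  have hrabs : |fl (a + b) - (a + b)| = |(M : ℝ)| * (2:ℝ) ^ g := by
    rw [show fl (a + b) - (a + b) = -((a + b) - fl (a + b)) by ring, abs_neg,
      hr, abs_mul, abs_of_pos hgpos]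
  have hmain : |(M : ℝ)| * (2:ℝ) ^ g < 2 ^ p * (2:ℝ) ^ g := by
    have hcases : g = ea ∨ g = eb ∨ g = ef := by omega
    rcases hcases with hge | hge | hge
    · have h3 : (0:ℝ) < (2:ℝ) ^ ea := by positivity
      have h1 : |a| = |(ma : ℝ)| * (2:ℝ) ^ ea := by
        rw [haeq, abs_mul, abs_of_pos h3]
      have h2 : |(ma : ℝ)| < 2 ^ p := by exact_mod_cast hma
      rw [hge]
      calc |(M : ℝ)| * (2:ℝ) ^ ea = |fl (a + b) - (a + b)| := by rw [hrabs, hge]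
      _ ≤ |a| := hba
      _ = |(ma : ℝ)| * (2:ℝ) ^ ea := h1
      _ < 2 ^ p * (2:ℝ) ^ ea := by exact mul_lt_mul_of_pos_right h2 h3
    · have h3 : (0:ℝ) < (2:ℝ) ^ eb := by positivity
      have h1 : |b| = |(mb : ℝ)| * (2:ℝ) ^ eb := by
        rw [hbeq, abs_mul, abs_of_pos h3]
      have h2 : |(mb : ℝ)| < 2 ^ p := by exact_mod_cast hmb
      rw [hge]
      calc |(M : ℝ)| * (2:ℝ) ^ eb = |fl (a + b) - (a + b)| := by rw [hrabs, hge]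
      _ ≤ |b| := hbb
      _ = |(mb : ℝ)| * (2:ℝ) ^ eb := h1
      _ < 2 ^ p * (2:ℝ) ^ eb := by exact mul_lt_mul_of_pos_right h2 h3
    · have hulp := half_ulp p hp fl hnear (a + b) mf ef hmf hfeq
      have h3 : (0:ℝ) < (2:ℝ) ^ ef := by positivity
      have h4 : (1:ℝ) ≤ 2 ^ p := one_le_pow₀ (by norm_num)
      rw [hge]
      calc |(M : ℝ)| * (2:ℝ) ^ ef = |fl (a + b) - (a + b)| := by rw [hrabs, hge]
      _ ≤ (2:ℝ) ^ ef / 2 := hulp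
      _ < 2 ^ p * (2:ℝ) ^ ef := by nlinarith
  have : |(M : ℝ)| < 2 ^ p := lt_of_mul_lt_mul_right hmain (le_of_lt hgpos)
  exact_mod_cast this
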